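/- Let P be a rooted oriented path on k vertices with a C-alternating tail, where 1 ≤ C < k, and let B = (W, R, E_B) be a rooted digraph structure. Then the following are equivalent: (i) there exist a function f : W → {C,…,k} and an embedding h of P↓C into B such that the graph G(f,h) contains a path of length k−C one of whose endpoints lies in f^{−1}(C); (ii) there exists an embedding of P into B. -/

import Mathlib

/-- A rooted path digraph on `k` vertices: a directed graph on `{1,…,k}` whose edges
all join consecutive vertices, with at least one direction present between any two
consecutive vertices; vertex `1` is the root. -/
structure RootedPathDigraph (k : ℕ) where
  EP : ℕ → ℕ → Prop
  subset : ∀ a b, EP a b → ∃ i, 1 ≤ i ∧ i + 1 ≤ k ∧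
    ((a = i ∧ b = i + 1) ∨ (a = i + 1 ∧ b = i))
  total : ∀ i, 1 ≤ i → i + 1 ≤ k → EP i (i + 1) ∨ EP (i + 1) i


/-- An embedding of the rooted path digraph `P` into a rooted digraph structure
`B = (W, R, E_B)`: an injective map `h : {1,…,k} → W` with `h(1) ∈ R` respecting all
edges of `P`. -/
def IsEmbeddingInto {W : Type*} {k : ℕ} (P : RootedPathDigraph k)
    (R : Set W) (EB : W → W → Prop) (h : ℕ → W) : Prop :=
  Set.InjOn h (Set.Icc 1 k) ∧ h 1 ∈ R ∧
  ∀ i, 1 ≤ i → i + 1 ≤ k →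
    (P.EP i (i + 1) → EB (h i) (h (i + 1))) ∧ (P.EP (i + 1) i → EB (h (i + 1)) (h i))

/-- An embedding of `P↓C` (the initial segment of `P` on `{1,…,C}`) into
`B = (W, R, E_B)`. -/
def IsEmbeddingDown {W : Type*} {k : ℕ} (P : RootedPathDigraph k)
    (R : Set W) (EB : W → W → Prop) (C : ℕ) (h : ℕ → W) : Prop :=
  Set.InjOn h (Set.Icc 1 C) ∧ h 1 ∈ R ∧
  ∀ i, 1 ≤ i → i + 1 ≤ C →
    (P.EP i (i + 1) → EB (h i) (h (i + 1))) ∧ (P.EP (i + 1) i → EB (h (i + 1)) (h i))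

/-- The undirected graph `G(f,h)` from the proof of Theorem 5.1: vertex set
`W ∖ {h(1),…,h(C−1)}`, adjacency the symmetric closure of the set of pairs
`(b,b') ∈ E_B` with `|f(b) − f(b')| = 1`, `(f(b), f(b')) ∈ E_P`, and such that a
vertex with `f`-value `C` must be `h(C)`. -/
def Gfh {W : Type*} {k : ℕ} (P : RootedPathDigraph k) (EB : W → W → Prop)
    (C : ℕ) (h : ℕ → W) (f : W → ℕ) : SimpleGraph W :=
  SimpleGraph.fromRel (fun b b' =>
    (∀ j, 1 ≤ j → j + 1 ≤ C → b ≠ h j ∧ b' ≠ h j) ∧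
    EB b b' ∧ (f b + 1 = f b' ∨ f b' + 1 = f b) ∧ P.EP (f b) (f b') ∧
    (f b = C → b = h C) ∧ (f b' = C → b' = h C))

section Aux

variable {V : Type*} {G : SimpleGraph V}

lemma aux_getVert_mem_support {u v : V} (p : G.Walk u v) (i : ℕ) :
    p.getVert i ∈ p.support := by
  induction p generalizing i with
  | nil => simp [SimpleGraph.Walk.getVert_of_length_le]
  | cons hadj q ih =>
    cases i with
    | zero => simp [SimpleGraph.Walk.getVert_zero]
    | succ n =>
      rw [SimpleGraph.Walk.getVert_cons_succ, SimpleGraph.Walk.support_cons]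
      exact List.mem_cons_of_mem _ (ih n)

lemma aux_getVert_inj {u v : V} (p : G.Walk u v) :
    p.IsPath → ∀ i j, i ≤ p.length → j ≤ p.length → p.getVert i = p.getVert j → i = j := by
  induction p with
  | nil =>
    intro _ i j hi hj _
    simp only [SimpleGraph.Walk.length_nil, Nat.le_zero] at hi hj
    omega
  | cons hadj q ih =>
    intro hp i j hi hj heq
    rw [SimpleGraph.Walk.cons_isPath_iff] at hp
    match i, j with
    | 0, 0 => rfl
    | 0, j + 1 =>
      rw [SimpleGraph.Walk.getVert_zero, SimpleGraph.Walk.getVert_cons_succ] at heq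
      exact absurd (heq ▸ aux_getVert_mem_support q j) hp.2
    | i + 1, 0 =>
      rw [SimpleGraph.Walk.getVert_zero, SimpleGraph.Walk.getVert_cons_succ] at heq
      exact absurd (heq ▸ aux_getVert_mem_support q i) hp.2
    | i + 1, j + 1 =>
      rw [SimpleGraph.Walk.getVert_cons_succ, SimpleGraph.Walk.getVert_cons_succ] at heq
      have := ih hp.1 i j (by simpa using hi) (by simpa using hj) heq
      omega

lemma aux_walk (G : SimpleGraph V) (g : ℕ → V) :
    ∀ n, (∀ j, j < n → G.Adj (g j) (g (j + 1))) →
      ∃ p : G.Walk (g 0) (g n), p.length = n ∧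
        p.support = (List.range (n + 1)).map g := by
  intro n
  induction n with
  | zero => exact fun _ => ⟨SimpleGraph.Walk.nil, rfl, by rw [List.range_succ]; simp⟩
  | succ n ih =>
    intro hadj
    obtain ⟨p, hlen, hsupp⟩ := ih (fun j hj => hadj j (by omega))
    refine ⟨p.concat (hadj n (by omega)), ?_, ?_⟩
    · rw [SimpleGraph.Walk.length_concat, hlen]
    · rw [SimpleGraph.Walk.support_concat, hsupp, List.range_succ (n := n + 1)]
      simp

lemma aux_alt {k C : ℕ} (P : RootedPathDigraph k)
    (horient : ∀ i, 1 ≤ i → i + 1 ≤ k → ¬ (P.EP i (i + 1) ∧ P.EP (i + 1) i))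
    (htail : ∀ i, max C 2 ≤ i → i + 1 ≤ k → (P.EP i (i + 1) ↔ ¬ P.EP (i - 1) i)) :
    ∀ d i, max (C - 1) 1 ≤ i → i + d + 1 ≤ k →
      (P.EP (i + d) (i + d + 1) ↔ (P.EP i (i + 1) ↔ d % 2 = 0)) := by
  intro d
  induction d with
  | zero => intro i _ _; simp
  | succ d ih =>
    intro i hi hk
    have hstep : P.EP (i + d + 1) (i + d + 1 + 1) ↔ ¬ P.EP (i + d) (i + d + 1) := by
      have := htail (i + d + 1) (by omega) (by omega)
      simpa using this
    have hih := ih i hi (by omega)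
    have hmod : (d + 1) % 2 = 0 ↔ ¬ (d % 2 = 0) := by omega
    rw [show i + (d + 1) = i + d + 1 by ring, hstep, hih, hmod]
    tauto

lemma aux_alt_par {k C : ℕ} (P : RootedPathDigraph k)
    (horient : ∀ i, 1 ≤ i → i + 1 ≤ k → ¬ (P.EP i (i + 1) ∧ P.EP (i + 1) i))
    (htail : ∀ i, max C 2 ≤ i → i + 1 ≤ k → (P.EP i (i + 1) ↔ ¬ P.EP (i - 1) i)) :
    ∀ i i', max (C - 1) 1 ≤ i → max (C - 1) 1 ≤ i' → i + 1 ≤ k → i' + 1 ≤ k →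
      (P.EP i' (i' + 1) ↔ (P.EP i (i + 1) ↔ (i + i') % 2 = 0)) := by
  intro i i' hi hi' hik hi'k
  rcases le_total i i' with hle | hle
  · have h1 := aux_alt P horient htail (i' - i) i hi (by omega)
    rw [show i + (i' - i) = i' by omega] at h1
    rw [h1, show (i' - i) % 2 = 0 ↔ (i + i') % 2 = 0 by omega]
  · have h1 := aux_alt P horient htail (i - i') i' hi' (by omega)
    rw [show i' + (i - i') = i by omega] at h1
    rw [show (i - i') % 2 = 0 ↔ (i + i') % 2 = 0 by omega] at h1
    tauto

end Aux

/-- Correctness of the parameterized logarithmic space algorithm in the proof of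
Theorem 5.1: for a rooted oriented path `P` on `k` vertices with a `C`-alternating
tail (`1 ≤ C < k`) and a rooted digraph structure `B = (W, R, E_B)`, the following
are equivalent: (i) there are a coloring `f : W → {C,…,k}` and an embedding `h` of
`P↓C` into `B` such that `G(f,h)` contains a path of length `k−C` with an endpoint
in `f⁻¹(C)`; (ii) `P` embeds into `B`. -/
theorem stmt13 {W : Type*} (k C : ℕ) (hC1 : 1 ≤ C) (hCk : C < k)
    (P : RootedPathDigraph k)
    (horient : ∀ i, 1 ≤ i → i + 1 ≤ k → ¬ (P.EP i (i + 1) ∧ P.EP (i + 1) i))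
    (htail : ∀ i, max C 2 ≤ i → i + 1 ≤ k → (P.EP i (i + 1) ↔ ¬ P.EP (i - 1) i))
    (R : Set W) (EB : W → W → Prop) :
    (∃ (f : W → ℕ) (h : ℕ → W), (∀ w, f w ∈ Set.Icc C k) ∧
        IsEmbeddingDown P R EB C h ∧
        ∃ u v, f u = C ∧
          ∃ p : (Gfh P EB C h f).Walk u v, p.IsPath ∧ p.length = k - C) ↔
    (∃ h : ℕ → W, IsEmbeddingInto P R EB h) := by
  classical
  constructor
  · rintro ⟨f, h, hf, ⟨hinj, hR, hedge⟩, u, v, hfu, p, hpath, hlen⟩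
    set n := k - C with hn
    set x : ℕ → W := p.getVert with hxdef
    have hx0 : x 0 = u := p.getVert_zero
    have hadj : ∀ j, j < n → (Gfh P EB C h f).Adj (x j) (x (j + 1)) :=
      fun j hj => p.adj_getVert_succ (by omega)
    have hxinj : ∀ i j, i ≤ n → j ≤ n → x i = x j → i = j :=
      fun i j hi hj => aux_getVert_inj p hpath i j (by omega) (by omega)
    simp only [Gfh, SimpleGraph.fromRel_adj] at hadj
    -- basic facts about f-values
    have hfC : ∀ w, C ≤ f w := fun w => (hf w).1
    have hfk : ∀ w, f w ≤ k := fun w => (hf w).2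
    -- every path vertex avoids h 1, …, h (C-1)
    have havoid : ∀ j, j ≤ n → ∀ i, 1 ≤ i → i + 1 ≤ C → x j ≠ h i := by
      intro j hj i hi1 hiC
      rcases lt_or_eq_of_le hj with hj' | hj'
      · rcases (hadj j hj').2 with hrel | hrel
        · exact (hrel.1 i hi1 hiC).1
        · exact (hrel.1 i hi1 hiC).2
      · have h0 : n - 1 < n := by omega
        rcases (hadj (n - 1) h0).2 with hrel | hrel
        · have := (hrel.1 i hi1 hiC).2
          rwa [show n - 1 + 1 = j by omega] at this
        · have := (hrel.1 i hi1 hiC).1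
          rwa [show n - 1 + 1 = j by omega] at this
    -- x 0 = h C
    have hx0C : x 0 = h C := by
      have h0 : (0:ℕ) < n := by omega
      have hfx0 : f (x 0) = C := by rw [hx0]; exact hfu
      rcases (hadj 0 h0).2 with hrel | hrel
      · exact hrel.2.2.2.2.1 hfx0
      · exact hrel.2.2.2.2.2 hfx0
    -- parity invariant
    have hpar : ∀ j, j ≤ n → f (x j) % 2 = (C + j) % 2 := by
      intro j
      induction j with
      | zero => intro _; rw [hx0, hfu]; omega
      | succ j ih =>
        intro hj
        have hih := ih (by omega)
        have hval : f (x j) + 1 = f (x (j + 1)) ∨ f (x (j + 1)) + 1 = f (x j) := by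
          rcases (hadj j (by omega)).2 with hrel | hrel
          · exact hrel.2.2.1
          · exact hrel.2.2.1.symm
        omega
    -- the key step lemma
    have hstep : ∀ j, j < n →
        (P.EP (C + j) (C + j + 1) → EB (x j) (x (j + 1))) ∧
        (P.EP (C + j + 1) (C + j) → EB (x (j + 1)) (x j)) := by
      intro j hj
      have hparj : f (x j) % 2 = (C + j) % 2 := hpar j (by omega)
      have hparj1 : f (x (j + 1)) % 2 = (C + j + 1) % 2 := hpar (j + 1) (by omega)
      have horj := horient (C + j) (by omega) (by omega)
      rcases (hadj j hj).2 with hrel | hrel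
      · obtain ⟨_, hEB, hval, hEP, -, -⟩ := hrel
        have hfwd : P.EP (C + j) (C + j + 1) := by
          rcases hval with hval | hval
          · -- up step
            have hEPa : P.EP (f (x j)) (f (x j) + 1) := by rwa [hval]
            have key := aux_alt_par P horient htail (f (x j)) (C + j)
              (by have := hfC (x j); omega) (by omega)
              (by have := hfk (x (j + 1)); omega) (by omega)
            exact key.mpr (iff_of_true hEPa (by omega))
          · -- down step
            set m := f (x (j + 1)) with hm
            have hEPb : P.EP (m + 1) m := by rwa [hval]
            have hnf : ¬ P.EP m (m + 1) := fun hc =>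
              horient m (by have := hfC (x (j + 1)); omega)
                (by have := hfk (x j); omega) ⟨hc, hEPb⟩
            have key := aux_alt_par P horient htail m (C + j)
              (by have := hfC (x (j + 1)); omega) (by omega)
              (by have := hfk (x j); omega) (by omega)
            exact key.mpr (iff_of_false hnf (by omega))
        exact ⟨fun _ => hEB, fun hc => absurd ⟨hfwd, hc⟩ horj⟩
      · obtain ⟨_, hEB, hval, hEP, -, -⟩ := hrel
        have hnfwd : ¬ P.EP (C + j) (C + j + 1) := by
          rcases hval with hval | hval
          · -- down step in f-values
            set m := f (x (j + 1)) with hm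
            have hEPb : P.EP m (m + 1) := by rwa [hval]
            have key := aux_alt_par P horient htail m (C + j)
              (by have := hfC (x (j + 1)); omega) (by omega)
              (by have := hfk (x j); omega) (by omega)
            rw [key]
            intro hcon
            have := hcon.mp hEPb
            omega
          · -- up step in f-values
            set m := f (x j) with hm
            have hEPb : P.EP (m + 1) m := by rwa [hval]
            have hnf : ¬ P.EP m (m + 1) := fun hc =>
              horient m (by have := hfC (x j); omega)
                (by have := hfk (x (j + 1)); omega) ⟨hc, hEPb⟩
            have key := aux_alt_par P horient htail m (C + j)
              (by have := hfC (x j); omega) (by omega)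
              (by have := hfk (x (j + 1)); omega) (by omega)
            rw [key]
            intro hcon
            exact hnf (hcon.mpr (by omega))
        exact ⟨fun hc => absurd hc hnfwd, fun _ => hEB⟩
    -- assemble the embedding
    refine ⟨fun i => if i ≤ C then h i else x (i - C), ?_, ?_, ?_⟩
    · intro a ha b hb heq
      simp only [Set.mem_Icc] at ha hb
      by_cases haC : a ≤ C <;> by_cases hbC : b ≤ C <;>
        simp only [if_pos, if_neg, haC, hbC, if_true, if_false] at heq
      · exact hinj ⟨ha.1, haC⟩ ⟨hb.1, hbC⟩ heq
      · rcases lt_or_eq_of_le haC with haC' | haC'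
        · exact absurd heq.symm (havoid (b - C) (by omega) a ha.1 (by omega))
        · have heq' : x (b - C) = x 0 := by rw [hx0C]; rw [haC'] at heq; exact heq.symm
          have := hxinj (b - C) 0 (by omega) (by omega) heq'
          omega
      · rcases lt_or_eq_of_le hbC with hbC' | hbC'
        · exact absurd heq (havoid (a - C) (by omega) b hb.1 (by omega))
        · have heq' : x (a - C) = x 0 := by rw [hx0C]; rw [hbC'] at heq; exact heq
          have := hxinj (a - C) 0 (by omega) (by omega) heq'
          omega
      · have := hxinj (a - C) (b - C) (by omega) (by omega) heq
        omega
    · beta_reduce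
      rw [if_pos hC1]; exact hR
    · intro i hi1 hik
      beta_reduce
      by_cases hiC : i + 1 ≤ C
      · rw [if_pos (by omega : i ≤ C), if_pos hiC]
        exact hedge i hi1 hiC
      · have e1 : (if i ≤ C then h i else x (i - C)) = x (i - C) := by
          by_cases hic : i ≤ C
          · rw [if_pos hic, show i - C = 0 by omega, hx0C,
              show i = C by omega]
          · rw [if_neg hic]
        have e2 : (if i + 1 ≤ C then h (i + 1) else x (i + 1 - C)) = x (i - C + 1) := by
          rw [if_neg hiC, show i + 1 - C = i - C + 1 by omega]
        rw [e1, e2]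
        have := hstep (i - C) (by omega)
        rwa [show C + (i - C) = i by omega] at this
  · rintro ⟨h, hinj, hR, hedge⟩
    -- define the coloring
    set f : W → ℕ := fun w =>
      if hw : ∃ i, (C ≤ i ∧ i ≤ k) ∧ h i = w then hw.choose else k with hfdef
    have hfh : ∀ i, C ≤ i → i ≤ k → f (h i) = i := by
      intro i hCi hik
      have hex : ∃ j, (C ≤ j ∧ j ≤ k) ∧ h j = h i := ⟨i, ⟨hCi, hik⟩, rfl⟩
      have hsp := hex.choose_spec
      rw [hfdef]
      simp only [dif_pos hex]
      exact hinj ⟨by omega, hsp.1.2⟩ ⟨by omega, hik⟩ hsp.2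
    have hfIcc : ∀ w, f w ∈ Set.Icc C k := by
      intro w
      rw [hfdef]
      by_cases hw : ∃ i, (C ≤ i ∧ i ≤ k) ∧ h i = w
      · simp only [dif_pos hw]
        exact ⟨hw.choose_spec.1.1, hw.choose_spec.1.2⟩
      · simp only [dif_neg hw]
        exact ⟨le_of_lt hCk, le_rfl⟩
    have hinj' : ∀ a b, 1 ≤ a → a ≤ k → 1 ≤ b → b ≤ k → h a = h b → a = b :=
      fun a b ha1 hak hb1 hbk he => hinj ⟨ha1, hak⟩ ⟨hb1, hbk⟩ he
    -- adjacency of consecutive tail vertices in G(f,h)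
    have hadj : ∀ j, j < k - C → (Gfh P EB C h f).Adj (h (C + j)) (h (C + j + 1)) := by
      intro j hj
      have hb1 : C + j + 1 ≤ k := by omega
      rw [Gfh, SimpleGraph.fromRel_adj]
      have hne : h (C + j) ≠ h (C + j + 1) := fun e => by
        have := hinj' _ _ (by omega) (by omega) (by omega) (by omega) e; omega
      have havoid : ∀ j', 1 ≤ j' → j' + 1 ≤ C →
          h (C + j) ≠ h j' ∧ h (C + j + 1) ≠ h j' := by
        intro j' h1 h2
        constructor <;> intro e <;>
          [have := hinj' _ _ (by omega) (by omega) (by omega) (by omega) e;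
           have := hinj' _ _ (by omega) (by omega) (by omega) (by omega) e] <;> omega
      have hf1 : f (h (C + j)) = C + j := hfh _ (by omega) (by omega)
      have hf2 : f (h (C + j + 1)) = C + j + 1 := hfh _ (by omega) (by omega)
      refine ⟨hne, ?_⟩
      rcases P.total (C + j) (by omega) hb1 with hfwd | hbwd
      · left
        refine ⟨havoid, (hedge (C + j) (by omega) hb1).1 hfwd, ?_, ?_, ?_, ?_⟩
        · left; rw [hf1, hf2]
        · rw [hf1, hf2]; exact hfwd
        · intro e; rw [hf1] at e
          have : j = 0 := by omega
          subst this; rfl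
        · intro e; rw [hf2] at e; omega
      · right
        refine ⟨fun j' a b => (havoid j' a b).symm, (hedge (C + j) (by omega) hb1).2 hbwd,
          ?_, ?_, ?_, ?_⟩
        · right; rw [hf1, hf2]
        · rw [hf1, hf2]; exact hbwd
        · intro e; rw [hf2] at e; omega
        · intro e; rw [hf1] at e
          have : j = 0 := by omega
          subst this; rfl
    obtain ⟨p, hplen, hpsupp⟩ := aux_walk (Gfh P EB C h f) (fun j => h (C + j)) (k - C) hadj
    refine ⟨f, h, hfIcc,
      ⟨hinj.mono (Set.Icc_subset_Icc_right (le_of_lt hCk)), hR,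
        fun i hi1 hiC => hedge i hi1 (le_trans hiC (le_of_lt hCk))⟩,
      h (C + 0), h (C + (k - C)), hfh _ (by omega) (by omega), p, ?_, hplen⟩
    rw [SimpleGraph.Walk.isPath_def, hpsupp]
    refine List.Nodup.map_on ?_ List.nodup_range
    intro a ha b hb he
    rw [List.mem_range] at ha hb
    have := hinj' _ _ (by omega) (by omega) (by omega) (by omega) he
    omega
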